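/- Let d ≥ 2 and m ≥ 1. For β, γ ∈ ℂ^{d×d} define (δ_n(β,γ)) by δ₀ = 0, δ₁ = I_d, δ_{n+1} = β δ_n + γ δ_{n−1} for n ≥ 1. Then the set of pairs (β, γ) ∈ (ℂ^{d×d})² such that det(β) ≠ 0, det(γ) ≠ 0, βγ ≠ γβ, and det(δ_n(β,γ)) ≠ 0 for all n ∈ {1, …, m}, is open and dense in (ℂ^{d×d})². -/

import Mathlib

open Matrix

/-- The sequence `δ_n(β, γ)` defined by `δ₀ = 0`, `δ₁ = I_d`,
`δ_{n+1} = β δ_n + γ δ_{n−1}`. -/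
noncomputable def deltaSeq {d : ℕ} (β γ : Matrix (Fin d) (Fin d) ℂ) :
    ℕ → Matrix (Fin d) (Fin d) ℂ
  | 0 => 0
  | 1 => 1
  | (n + 2) => β * deltaSeq β γ (n + 1) + γ * deltaSeq β γ n

lemma deltaSeq_add_two {d : ℕ} (β γ : Matrix (Fin d) (Fin d) ℂ) (n : ℕ) :
    deltaSeq β γ (n + 2) = β * deltaSeq β γ (n + 1) + γ * deltaSeq β γ n := by
  rw [deltaSeq]

section Aux

open Set

attribute [local instance] Matrix.normedAddCommGroup Matrix.normedSpace

variable {d : ℕ}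

local notation "E" => (Matrix (Fin d) (Fin d) ℂ × Matrix (Fin d) (Fin d) ℂ)

/-- entry evaluation of the first component as a continuous linear map -/
noncomputable def entry1 (d : ℕ) (i j : Fin d) :
    (Matrix (Fin d) (Fin d) ℂ × Matrix (Fin d) (Fin d) ℂ) →L[ℂ] ℂ :=
  LinearMap.toContinuousLinearMap
    { toFun := fun p => p.1 i j
      map_add' := fun _ _ => rfl
      map_smul' := fun _ _ => rfl }

noncomputable def entry2 (d : ℕ) (i j : Fin d) :
    (Matrix (Fin d) (Fin d) ℂ × Matrix (Fin d) (Fin d) ℂ) →L[ℂ] ℂ :=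
  LinearMap.toContinuousLinearMap
    { toFun := fun p => p.2 i j
      map_add' := fun _ _ => rfl
      map_smul' := fun _ _ => rfl }

lemma analytic_entry1 (i j : Fin d) :
    AnalyticOnNhd ℂ (fun p : E => p.1 i j) univ :=
  (entry1 d i j).analyticOnNhd univ

lemma analytic_entry2 (i j : Fin d) :
    AnalyticOnNhd ℂ (fun p : E => p.2 i j) univ :=
  (entry2 d i j).analyticOnNhd univ

/-- analyticity of the determinant of an entrywise-analytic matrix family -/
lemma analytic_det {f : (Matrix (Fin d) (Fin d) ℂ × Matrix (Fin d) (Fin d) ℂ) → Matrix (Fin d) (Fin d) ℂ}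
    (h : ∀ i j, AnalyticOnNhd ℂ (fun p : E => f p i j) univ) :
    AnalyticOnNhd ℂ (fun p : E => (f p).det) univ := by
  have : (fun p : E => (f p).det)
      = fun p : E => ∑ σ : Equiv.Perm (Fin d), (Equiv.Perm.sign σ : ℂ) * ∏ i, f p (σ i) i := by
    funext p; rw [Matrix.det_apply']
  rw [this]
  apply Finset.analyticOnNhd_fun_sum
  intro σ _
  exact analyticOnNhd_const.mul <| Finset.analyticOnNhd_fun_prod _ fun i _ => h (σ i) i

lemma analytic_delta_entry :
    ∀ n (i j : Fin d), AnalyticOnNhd ℂ (fun p : E => deltaSeq p.1 p.2 n i j) univ := by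
  have key : ∀ n, (∀ i j : Fin d, AnalyticOnNhd ℂ (fun p : E => deltaSeq p.1 p.2 n i j) univ) ∧
      (∀ i j : Fin d, AnalyticOnNhd ℂ (fun p : E => deltaSeq p.1 p.2 (n+1) i j) univ) := by
    intro n
    induction n with
    | zero =>
      constructor
      · intro i j
        have : (fun p : E => deltaSeq p.1 p.2 0 i j) = fun _ => (0 : ℂ) := by
          funext p; simp [deltaSeq]
        rw [this]; exact analyticOnNhd_const
      · intro i j
        have : (fun p : E => deltaSeq p.1 p.2 1 i j) = fun _ => ((1 : Matrix (Fin d) (Fin d) ℂ) i j) := by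
          funext p; simp [deltaSeq]
        rw [this]; exact analyticOnNhd_const
    | succ n ih =>
      refine ⟨ih.2, fun i j => ?_⟩
      have : (fun p : E => deltaSeq p.1 p.2 (n+2) i j)
          = fun p : E => (∑ k, p.1 i k * deltaSeq p.1 p.2 (n+1) k j)
            + ∑ k, p.2 i k * deltaSeq p.1 p.2 n k j := by
        funext p
        rw [deltaSeq_add_two, Matrix.add_apply, Matrix.mul_apply, Matrix.mul_apply]
      rw [this]
      exact (Finset.analyticOnNhd_fun_sum _ fun k _ => (analytic_entry1 i k).mul (ih.2 k j)).add
        (Finset.analyticOnNhd_fun_sum _ fun k _ => (analytic_entry2 i k).mul (ih.1 k j))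
  exact fun n => (key n).1

/-- two analytic functions on a preconnected normed space, each nonzero somewhere,
have a common point of nonvanishing. -/
lemma analytic_mul_exists_ne_zero {E' : Type*} [NormedAddCommGroup E'] [NormedSpace ℂ E']
    [PreconnectedSpace E'] {f g : E' → ℂ}
    (hf : AnalyticOnNhd ℂ f univ) (hg : AnalyticOnNhd ℂ g univ)
    (hf0 : ∃ x, f x ≠ 0) (hg0 : ∃ x, g x ≠ 0) : ∃ x, f x * g x ≠ 0 := by
  by_contra h
  push_neg at h
  obtain ⟨x, hx⟩ := hf0
  have hne : ∀ᶠ y in nhds x, f y ≠ 0 := (hf x trivial).continuousAt.eventually_ne hx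
  have hg' : g =ᶠ[nhds x] 0 := hne.mono fun y hy => by
    have := h y
    rcases mul_eq_zero.1 this with h1 | h2
    · exact absurd h1 hy
    · exact h2
  have := hg.eqOn_zero_of_preconnected_of_eventuallyEq_zero isPreconnected_univ (mem_univ x) hg'
  obtain ⟨y, hy⟩ := hg0
  exact hy (this (mem_univ y))

lemma dense_of_analytic {E' : Type*} [NormedAddCommGroup E'] [NormedSpace ℂ E']
    [PreconnectedSpace E'] {F : E' → ℂ}
    (hF : AnalyticOnNhd ℂ F univ) (h0 : ∃ z, F z ≠ 0) : Dense {x | F x ≠ 0} := by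
  intro x
  rw [mem_closure_iff_nhds]
  intro t ht
  by_contra h
  rw [Set.not_nonempty_iff_eq_empty] at h
  have hFz : F =ᶠ[nhds x] 0 := Filter.eventually_of_mem ht fun y hy => by
    simp only [Pi.zero_apply]
    by_contra hFy
    exact Set.eq_empty_iff_forall_notMem.1 h y ⟨hy, hFy⟩
  have := hF.eqOn_zero_of_preconnected_of_eventuallyEq_zero isPreconnected_univ (mem_univ x) hFz
  obtain ⟨z, hz⟩ := h0
  exact hz (this (mem_univ z))

/-- value of deltaSeq at the pair (2•1, -1) -/
lemma deltaSeq_special (n : ℕ) :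
    deltaSeq ((2 : ℂ) • (1 : Matrix (Fin d) (Fin d) ℂ)) (-1) n = (n : ℂ) • 1 := by
  induction n using Nat.strong_induction_on with
  | _ n ih =>
    match n with
    | 0 => simp [deltaSeq]
    | 1 => simp [deltaSeq]
    | (n + 2) =>
      rw [deltaSeq_add_two, ih (n+1) (by omega), ih n (by omega)]
      push_cast
      rw [Matrix.smul_mul, Matrix.one_mul, smul_smul]
      rw [neg_one_mul]
      rw [← sub_eq_add_neg, ← sub_smul]
      congr 1
      ring

end Aux

/-- the set of pairs `(β, γ)` such that `β` and `γ` are invertible,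
`β` and `γ` do not commute, and `det(δ_n(β, γ)) ≠ 0` for all `n ∈ {1, …, m}`,
is open and dense in the space of pairs of `d × d` complex matrices. -/
theorem stmt16 (d : ℕ) (hd : 2 ≤ d) (m : ℕ) (hm : 1 ≤ m) :
    IsOpen {p : Matrix (Fin d) (Fin d) ℂ × Matrix (Fin d) (Fin d) ℂ |
        p.1.det ≠ 0 ∧ p.2.det ≠ 0 ∧ p.1 * p.2 ≠ p.2 * p.1 ∧
        ∀ n ∈ Finset.Icc 1 m, (deltaSeq p.1 p.2 n).det ≠ 0} ∧
    Dense {p : Matrix (Fin d) (Fin d) ℂ × Matrix (Fin d) (Fin d) ℂ |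
        p.1.det ≠ 0 ∧ p.2.det ≠ 0 ∧ p.1 * p.2 ≠ p.2 * p.1 ∧
        ∀ n ∈ Finset.Icc 1 m, (deltaSeq p.1 p.2 n).det ≠ 0} := by
  classical
  letI : NormedAddCommGroup (Matrix (Fin d) (Fin d) ℂ) := Matrix.normedAddCommGroup
  letI : NormedSpace ℂ (Matrix (Fin d) (Fin d) ℂ) := Matrix.normedSpace
  set E := Matrix (Fin d) (Fin d) ℂ × Matrix (Fin d) (Fin d) ℂ
  set i₀ : Fin d := ⟨0, by omega⟩
  set j₀ : Fin d := ⟨1, by omega⟩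
  have hij : i₀ ≠ j₀ := by simp [i₀, j₀, Fin.ext_iff]
  -- analytic building blocks
  have hdet1 : AnalyticOnNhd ℂ (fun p : E => p.1.det) Set.univ :=
    analytic_det fun i j => analytic_entry1 i j
  have hdet2 : AnalyticOnNhd ℂ (fun p : E => p.2.det) Set.univ :=
    analytic_det fun i j => analytic_entry2 i j
  have hcomm : AnalyticOnNhd ℂ (fun p : E => (p.1 * p.2 - p.2 * p.1) i₀ j₀) Set.univ := by
    have : (fun p : E => (p.1 * p.2 - p.2 * p.1) i₀ j₀)
        = fun p : E => (∑ k, p.1 i₀ k * p.2 k j₀) - ∑ k, p.2 i₀ k * p.1 k j₀ := by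
      funext p; rw [Matrix.sub_apply, Matrix.mul_apply, Matrix.mul_apply]
    rw [this]
    exact (Finset.analyticOnNhd_fun_sum _ fun k _ => (analytic_entry1 i₀ k).mul (analytic_entry2 k j₀)).sub
      (Finset.analyticOnNhd_fun_sum _ fun k _ => (analytic_entry2 i₀ k).mul (analytic_entry1 k j₀))
  have hdelta : ∀ n, AnalyticOnNhd ℂ (fun p : E => (deltaSeq p.1 p.2 n).det) Set.univ :=
    fun n => analytic_det fun i j => analytic_delta_entry n i j
  have hprod : AnalyticOnNhd ℂ
      (fun p : E => ∏ n ∈ Finset.Icc 1 m, (deltaSeq p.1 p.2 n).det) Set.univ :=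
    Finset.analyticOnNhd_fun_prod _ fun n _ => hdelta n
  -- continuity of delta entries
  have hdeltacont : ∀ n, Continuous (fun p : E => deltaSeq p.1 p.2 n) := by
    intro n
    apply continuous_matrix
    intro i j
    exact continuousOn_univ.1 (analytic_delta_entry n i j).continuousOn
  constructor
  · -- openness
    have h1 : IsOpen {p : E | p.1.det ≠ 0} :=
      isOpen_ne_fun (continuousOn_univ.1 hdet1.continuousOn) continuous_const
    have h2 : IsOpen {p : E | p.2.det ≠ 0} :=
      isOpen_ne_fun (continuousOn_univ.1 hdet2.continuousOn) continuous_const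
    have h3 : IsOpen {p : E | p.1 * p.2 ≠ p.2 * p.1} :=
      isOpen_ne_fun (continuous_fst.matrix_mul continuous_snd)
        (continuous_snd.matrix_mul continuous_fst)
    have h4 : IsOpen {p : E | ∀ n ∈ Finset.Icc 1 m, (deltaSeq p.1 p.2 n).det ≠ 0} := by
      have : {p : E | ∀ n ∈ Finset.Icc 1 m, (deltaSeq p.1 p.2 n).det ≠ 0}
          = ⋂ n ∈ Finset.Icc 1 m, {p : E | (deltaSeq p.1 p.2 n).det ≠ 0} := by
        ext p; simp
      rw [this]
      exact isOpen_biInter_finset fun n _ =>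
        isOpen_ne_fun ((hdeltacont n).matrix_det) continuous_const
    have : {p : E | p.1.det ≠ 0 ∧ p.2.det ≠ 0 ∧ p.1 * p.2 ≠ p.2 * p.1 ∧
        ∀ n ∈ Finset.Icc 1 m, (deltaSeq p.1 p.2 n).det ≠ 0}
        = {p : E | p.1.det ≠ 0} ∩ ({p : E | p.2.det ≠ 0} ∩ ({p : E | p.1 * p.2 ≠ p.2 * p.1} ∩
          {p : E | ∀ n ∈ Finset.Icc 1 m, (deltaSeq p.1 p.2 n).det ≠ 0})) := by
      ext p; simp [Set.mem_inter_iff, and_assoc]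
    rw [this]
    exact h1.inter (h2.inter (h3.inter h4))
  · -- density
    -- witnesses
    have w1 : ∃ p : E, p.1.det ≠ 0 := ⟨(1, 1), by simp⟩
    have w2 : ∃ p : E, p.2.det ≠ 0 := ⟨(1, 1), by simp⟩
    have w3 : ∃ p : E, (p.1 * p.2 - p.2 * p.1) i₀ j₀ ≠ 0 := by
      refine ⟨(Matrix.single i₀ i₀ 1, Matrix.single i₀ j₀ 1), ?_⟩
      have e1 : Matrix.single i₀ i₀ (1:ℂ) * Matrix.single i₀ j₀ 1
          = Matrix.single i₀ j₀ 1 := by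
        rw [Matrix.single_mul_single_same, one_mul]
      have e2 : Matrix.single i₀ j₀ (1:ℂ) * Matrix.single i₀ i₀ 1 = 0 :=
        Matrix.single_mul_single_of_ne (h := Ne.symm hij) (d := 1) ..
      show ((Matrix.single i₀ i₀ (1:ℂ) * Matrix.single i₀ j₀ 1
          - Matrix.single i₀ j₀ 1 * Matrix.single i₀ i₀ 1 :
          Matrix (Fin d) (Fin d) ℂ)) i₀ j₀ ≠ 0
      rw [e1, e2, sub_zero, Matrix.single_apply_same]
      exact one_ne_zero
    have w4 : ∃ p : E, (∏ n ∈ Finset.Icc 1 m, (deltaSeq p.1 p.2 n).det) ≠ 0 := by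
      refine ⟨((2 : ℂ) • 1, -1), ?_⟩
      rw [Finset.prod_ne_zero_iff]
      intro n hn
      rw [deltaSeq_special, Matrix.det_smul, Matrix.det_one, mul_one]
      have hn1 : 1 ≤ n := (Finset.mem_Icc.1 hn).1
      exact pow_ne_zero _ (Nat.cast_ne_zero.2 (by omega))
    -- combine
    set F : E → ℂ := fun p => p.1.det * p.2.det *
      ((p.1 * p.2 - p.2 * p.1) i₀ j₀ * ∏ n ∈ Finset.Icc 1 m, (deltaSeq p.1 p.2 n).det) with hF
    have hFan : AnalyticOnNhd ℂ F Set.univ := (hdet1.mul hdet2).mul (hcomm.mul hprod)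
    have hFne : ∃ p : E, F p ≠ 0 := by
      apply analytic_mul_exists_ne_zero (hdet1.mul hdet2) (hcomm.mul hprod)
      · exact analytic_mul_exists_ne_zero hdet1 hdet2 w1 w2
      · exact analytic_mul_exists_ne_zero hcomm hprod w3 w4
    have hdense : Dense {p : E | F p ≠ 0} := dense_of_analytic hFan hFne
    apply hdense.mono
    intro p hp
    simp only [Set.mem_setOf_eq, hF] at hp ⊢
    have h1 : p.1.det ≠ 0 := fun h => hp (by rw [h]; ring)
    have h2 : p.2.det ≠ 0 := fun h => hp (by rw [h]; ring)
    have h3 : (p.1 * p.2 - p.2 * p.1) i₀ j₀ ≠ 0 := fun h => hp (by rw [h]; ring)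
    have h4 : (∏ n ∈ Finset.Icc 1 m, (deltaSeq p.1 p.2 n).det) ≠ 0 := fun h => hp (by rw [h]; ring)
    refine ⟨h1, h2, ?_, ?_⟩
    · intro h
      exact h3 (by rw [h, sub_self, Matrix.zero_apply])
    · intro n hn
      exact Finset.prod_ne_zero_iff.1 h4 n hn
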